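/- Let H be a real n×m matrix of rank m, R_x and R_n positive definite, ε > 0, R_y = H R_x Hᵀ + ε R_n, and W_BLUE = (Hᵀ R_y⁻¹ H)⁻¹ Hᵀ R_y⁻¹. Then (Hᵀ R_y⁻¹ H)⁻¹ Hᵀ R_y⁻¹ = (Hᵀ R_n⁻¹ H)⁻¹ Hᵀ R_n⁻¹, i.e., the two expressions for the stochastic BLUE estimator coincide. -/

import Mathlib

open Matrix

lemma mulVec_inj {n m : ℕ} (H : Matrix (Fin n) (Fin m) ℝ) (hH : H.rank = m) :
    Function.Injective H.mulVec := by
  rw [show H.mulVec = H.mulVecLin from rfl, ← LinearMap.ker_eq_bot]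
  have h := H.mulVecLin.finrank_range_add_finrank_ker
  rw [show Module.finrank ℝ (LinearMap.range H.mulVecLin) = H.rank from rfl, hH] at h
  simp [Module.finrank_fin_fun] at h
  exact h

lemma conj_posDef {n m : ℕ} (H : Matrix (Fin n) (Fin m) ℝ) (hH : H.rank = m)
    {A : Matrix (Fin n) (Fin n) ℝ} (hA : A.PosDef) : (Hᵀ * A * H).PosDef := by
  refine PosDef.of_dotProduct_mulVec_pos ?_ ?_
  · have h := isHermitian_conjTranspose_mul_mul H hA.isHermitian
    simpa [conjTranspose_eq_transpose_of_trivial] using h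
  · intro x hx
    have hx' : H *ᵥ x ≠ 0 := by
      intro h
      exact hx (mulVec_inj H hH (by simpa using h))
    have := hA.dotProduct_mulVec_pos hx'
    simpa [← mulVec_mulVec, dotProduct_mulVec, vecMul_transpose, star, dotProduct_mulVec]
      using this

lemma smul_posDef {k : ℕ} {A : Matrix (Fin k) (Fin k) ℝ} (hA : A.PosDef)
    {c : ℝ} (hc : 0 < c) : (c • A).PosDef := by
  refine PosDef.of_dotProduct_mulVec_pos ?_ (fun x hx => ?_)
  · have := hA.isHermitian
    unfold Matrix.IsHermitian at *
    rw [conjTranspose_smul, this]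
    simp
  · rw [smul_mulVec, dotProduct_smul, smul_eq_mul]
    exact mul_pos hc (hA.dotProduct_mulVec_pos hx)

theorem stmt1 {n m : ℕ} (H : Matrix (Fin n) (Fin m) ℝ)
    (Rx : Matrix (Fin m) (Fin m) ℝ) (Rn Ry : Matrix (Fin n) (Fin n) ℝ)
    (hH : H.rank = m) (hRx : Rx.PosDef) (hRn : Rn.PosDef)
    (ε : ℝ) (hε : 0 < ε) (hRy : Ry = H * Rx * Hᵀ + ε • Rn) :
    (Hᵀ * Ry⁻¹ * H)⁻¹ * (Hᵀ * Ry⁻¹) = (Hᵀ * Rn⁻¹ * H)⁻¹ * (Hᵀ * Rn⁻¹) := by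
  set S : Matrix (Fin n) (Fin n) ℝ := ε • Rn with hSdef
  have hS : S.PosDef := smul_posDef hRn hε
  have hHRxHT : (H * Rx * Hᵀ).PosSemidef := by
    have := hRx.posSemidef.mul_mul_conjTranspose_same H
    simpa [conjTranspose_eq_transpose_of_trivial] using this
  have hRyP : Ry.PosDef := hRy ▸ Matrix.PosDef.posSemidef_add hHRxHT hS
  set K : Matrix (Fin m) (Fin m) ℝ := Hᵀ * S⁻¹ * H with hKdef
  set N : Matrix (Fin m) (Fin m) ℝ := Hᵀ * Rn⁻¹ * H with hNdef
  have hK : K.PosDef := conj_posDef H hH hS.inv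
  have hN : N.PosDef := conj_posDef H hH hRn.inv
  set M : Matrix (Fin m) (Fin m) ℝ := 1 + Rx * K with hMdef
  have hKd : IsUnit K.det := hK.det_pos.ne'.isUnit
  have hNd : IsUnit N.det := hN.det_pos.ne'.isUnit
  have hRyd : IsUnit Ry.det := hRyP.det_pos.ne'.isUnit
  have hSd : IsUnit S.det := hS.det_pos.ne'.isUnit
  have hRnd : IsUnit Rn.det := hRn.det_pos.ne'.isUnit
  have hMeq : M = (K⁻¹ + Rx) * K := by
    rw [add_mul, Matrix.nonsing_inv_mul K hKd, hMdef]
  have hMd : IsUnit M.det := by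
    rw [hMeq, det_mul]
    exact ((hK.inv.add hRx).det_pos.ne'.isUnit).mul hKd
  have hMTd : IsUnit Mᵀ.det := by rwa [det_transpose]
  -- key : Ry * (S⁻¹ * H) = H * M
  have key : Ry * (S⁻¹ * H) = H * M := by
    rw [hRy]
    have : (H * Rx * Hᵀ + S) * (S⁻¹ * H)
        = H * Rx * (Hᵀ * S⁻¹ * H) + (S * S⁻¹) * H := by
      simp only [Matrix.add_mul, Matrix.mul_assoc]
    rw [this, Matrix.mul_nonsing_inv S hSd, ← hKdef, hMdef]
    simp [Matrix.mul_add, Matrix.mul_assoc, add_comm]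
  have hinv : Ry⁻¹ * H = S⁻¹ * H * M⁻¹ := by
    have h2 : Ry * (S⁻¹ * H * M⁻¹) = H := by
      rw [← Matrix.mul_assoc, Matrix.mul_assoc Ry, ← Matrix.mul_assoc Ry, key,
        Matrix.mul_assoc, Matrix.mul_nonsing_inv M hMd, Matrix.mul_one]
    calc Ry⁻¹ * H = Ry⁻¹ * (Ry * (S⁻¹ * H * M⁻¹)) := by rw [h2]
    _ = (Ry⁻¹ * Ry) * (S⁻¹ * H * M⁻¹) := by simp [Matrix.mul_assoc]
    _ = S⁻¹ * H * M⁻¹ := by rw [Matrix.nonsing_inv_mul Ry hRyd, Matrix.one_mul]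
  -- Hᵀ * Ry⁻¹ = Mᵀ⁻¹ * (Hᵀ * S⁻¹)
  have hRyinvsymm : (Ry⁻¹)ᵀ = Ry⁻¹ := by
    have h := hRyP.inv.isHermitian
    simpa [conjTranspose_eq_transpose_of_trivial] using h.eq
  have hSsymm : (S⁻¹)ᵀ = S⁻¹ := by
    have h := hS.inv.isHermitian
    simpa [conjTranspose_eq_transpose_of_trivial] using h.eq
  have hKsymm : Kᵀ = K := by
    have h := hK.isHermitian
    simpa [conjTranspose_eq_transpose_of_trivial] using h.eq
  have hRxsymm : Rxᵀ = Rx := by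
    have h := hRx.isHermitian
    simpa [conjTranspose_eq_transpose_of_trivial] using h.eq
  have hT : Hᵀ * Ry⁻¹ = (Mᵀ)⁻¹ * (Hᵀ * S⁻¹) := by
    have := congrArg Matrix.transpose hinv
    simpa [transpose_mul, hRyinvsymm, hSsymm, transpose_nonsing_inv, Matrix.mul_assoc]
      using this
  have hKM : Hᵀ * Ry⁻¹ * H = K * M⁻¹ := by
    rw [Matrix.mul_assoc, hinv, ← Matrix.mul_assoc, ← Matrix.mul_assoc, hKdef]
  -- commutation : Mᵀ * K = K * M
  have hcomm : Mᵀ * K = K * M := by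
    rw [hMdef, transpose_add, transpose_one, transpose_mul, hKsymm, hRxsymm]
    noncomm_ring
  have hinvcomm : K⁻¹ * (Mᵀ)⁻¹ = M⁻¹ * K⁻¹ := by
    rw [← Matrix.mul_inv_rev, ← Matrix.mul_inv_rev, hcomm]
  -- LHS simplification
  have hLHS : (Hᵀ * Ry⁻¹ * H)⁻¹ * (Hᵀ * Ry⁻¹) = K⁻¹ * (Hᵀ * S⁻¹) := by
    rw [hKM, hT, Matrix.mul_inv_rev, Matrix.nonsing_inv_nonsing_inv M hMd,
      Matrix.mul_assoc M, ← Matrix.mul_assoc K⁻¹, hinvcomm, Matrix.mul_assoc,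
      ← Matrix.mul_assoc M, Matrix.mul_nonsing_inv M hMd, Matrix.one_mul]
  rw [hLHS]
  -- final : K⁻¹ * (Hᵀ * S⁻¹) = N⁻¹ * (Hᵀ * Rn⁻¹)
  haveI : Invertible ε := invertibleOfNonzero hε.ne'
  have hSinv : S⁻¹ = ε⁻¹ • Rn⁻¹ := by
    rw [hSdef, Matrix.inv_smul (A := Rn) ε hRnd, invOf_eq_inv ε]
  have hKN : K = ε⁻¹ • N := by
    rw [hKdef, hSinv, hNdef, Matrix.mul_smul, Matrix.smul_mul]
  haveI : Invertible ε⁻¹ := invertibleOfNonzero (inv_ne_zero hε.ne')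
  have hKNinv : K⁻¹ = ε • N⁻¹ := by
    rw [hKN, Matrix.inv_smul (A := N) ε⁻¹ hNd, invOf_eq_inv ε⁻¹, inv_inv]
  rw [hKNinv, hSinv, Matrix.smul_mul, Matrix.mul_smul, Matrix.mul_smul, smul_smul,
    mul_inv_cancel₀ hε.ne', one_smul]
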